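/- Let X be a random variable with values in C^N taking exactly N+1 distinct values v_1, ..., v_{N+1} with strictly positive probabilities p_1, ..., p_{N+1}. Then X is centered (E[X] = 0) and normalized (E[X̄^i X^j] = δ_{ij} for all i,j) if and only if {v_1, ..., v_{N+1}} is an obtuse system in C^N and p_i = 1/(1 + ‖v_i‖²) for all i. -/

import Mathlib

open scoped BigOperators InnerProductSpace ComplexConjugate
open Matrix

/-- **Characterization of obtuse random variables.**
Let `X` be a `ℂ^N`-valued random variable on `Ω = {1,…,N+1}`, taking the `N+1`
distinct values `v i` with strictly positive probabilities `p i`.  Then `X` is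
centered and normalized if and only if `{v i}` is an obtuse system in `ℂ^N` and
`p i = 1 / (1 + ‖v i‖²)` for all `i`. -/
theorem obtuse_random_variable_characterization (N : ℕ)
    (v : Fin (N + 1) → EuclideanSpace ℂ (Fin N)) (hv : Function.Injective v)
    (p : Fin (N + 1) → ℝ) (hp : ∀ i, 0 < p i) (hp1 : ∑ i, p i = 1) :
    ((∀ k, ∑ i, (p i : ℂ) * v i k = 0) ∧
      (∀ k l, ∑ i, (p i : ℂ) * ((starRingEnd ℂ) (v i k) * v i l)
        = if k = l then 1 else 0))
    ↔ ((∀ i j, i ≠ j → ⟪v i, v j⟫_ℂ = -1) ∧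
        ∀ i, p i = 1 / (1 + ‖v i‖ ^ 2)) := by
  classical
  set s : Fin (N + 1) → ℂ := fun i => ((Real.sqrt (p i) : ℝ) : ℂ) with hs
  have hss : ∀ i, s i * s i = (p i : ℂ) := by
    intro i
    simp only [hs, ← Complex.ofReal_mul, Real.mul_self_sqrt (hp i).le]
  have hsstar : ∀ i, star (s i) = s i := fun i => Complex.conj_ofReal _
  have hsne : ∀ i, s i ≠ 0 := fun i =>
    Complex.ofReal_ne_zero.mpr (Real.sqrt_ne_zero'.mpr (hp i))
  set c : Fin (N + 1) → Fin (N + 1) → ℂ := fun i => Fin.cases 1 (v i) with hc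
  set W : Matrix (Fin (N + 1)) (Fin (N + 1)) ℂ := fun i a => s i * c i a with hW
  have hentry1 : ∀ a b, (Wᴴ * W) a b =
      ∑ i, (p i : ℂ) * (star (c i a) * c i b) := by
    intro a b
    rw [Matrix.mul_apply]
    refine Finset.sum_congr rfl fun i _ => ?_
    rw [Matrix.conjTranspose_apply, hW]
    simp only [star_mul', hsstar]
    rw [← hss i]; ring
  have hentry2 : ∀ i j, (W * Wᴴ) i j = s i * s j * (1 + ⟪v j, v i⟫_ℂ) := by
    intro i j
    rw [Matrix.mul_apply]
    have : ∀ a, W i a * Wᴴ a j = s i * s j * (c i a * star (c j a)) := by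
      intro a
      rw [Matrix.conjTranspose_apply, hW]
      simp only [star_mul', hsstar]
      ring
    simp only [this]
    rw [← Finset.mul_sum, Fin.sum_univ_succ]
    congr 1
    simp only [hc, Fin.cases_zero, Fin.cases_succ, star_one, mul_one]
    congr 1
  have hL : (Wᴴ * W = 1) ↔
      ((∀ k, ∑ i, (p i : ℂ) * v i k = 0) ∧
        (∀ k l, ∑ i, (p i : ℂ) * ((starRingEnd ℂ) (v i k) * v i l)
          = if k = l then 1 else 0)) := by
    rw [← Matrix.ext_iff]
    constructor
    · intro h
      constructor
      · intro k
        have := h 0 k.succ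
        rw [hentry1, Matrix.one_apply] at this
        simpa [hc, Fin.succ_ne_zero, (Fin.succ_ne_zero k).symm] using this
      · intro k l
        have := h k.succ l.succ
        rw [hentry1, Matrix.one_apply] at this
        simpa [hc, Fin.succ_inj, Complex.star_def] using this
    · rintro ⟨h1, h2⟩ a b
      rw [hentry1, Matrix.one_apply]
      induction a using Fin.cases with
      | zero =>
        induction b using Fin.cases with
        | zero =>
          simp only [hc, Fin.cases_zero, star_one, mul_one, if_pos rfl, if_true]
          rw [← Complex.ofReal_sum, hp1, Complex.ofReal_one]
        | succ k =>
          simp only [hc, Fin.cases_zero, Fin.cases_succ, star_one, one_mul,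
            if_neg (Fin.succ_ne_zero k).symm]
          exact h1 k
      | succ k =>
        induction b using Fin.cases with
        | zero =>
          simp only [hc, Fin.cases_zero, Fin.cases_succ, mul_one,
            if_neg (Fin.succ_ne_zero k)]
          have := congrArg star (h1 k)
          simpa [star_sum, Complex.star_def, mul_comm] using this
        | succ l =>
          have := h2 k l
          simp only [hc, Fin.cases_succ, Fin.succ_inj, Complex.star_def]
          simpa using this
  have hR : (W * Wᴴ = 1) ↔
      ((∀ i j, i ≠ j → ⟪v i, v j⟫_ℂ = -1) ∧
        ∀ i, p i = 1 / (1 + ‖v i‖ ^ 2)) := by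
    rw [← Matrix.ext_iff]
    have hnorm : ∀ i, ⟪v i, v i⟫_ℂ = ((‖v i‖ ^ 2 : ℝ) : ℂ) := by
      intro i
      rw [inner_self_eq_norm_sq_to_K]; norm_num
    constructor
    · intro h
      constructor
      · intro i j hij
        have := h j i
        rw [hentry2, Matrix.one_apply, if_neg (Ne.symm hij)] at this
        have h3 : (1 + ⟪v i, v j⟫_ℂ) = 0 := by
          rcases mul_eq_zero.mp this with h' | h'
          · exact absurd h' (mul_ne_zero (hsne j) (hsne i))
          · exact h'
        linear_combination h3
      · intro i
        have := h i i
        rw [hentry2, Matrix.one_apply, if_pos rfl, hss, hnorm] at this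
        have hpos : (0:ℝ) < 1 + ‖v i‖ ^ 2 := by positivity
        have hre : p i * (1 + ‖v i‖ ^ 2) = 1 := by
          push_cast at this
          exact_mod_cast this
        field_simp
        linarith [hre]
    · rintro ⟨h1, h2⟩ i j
      rw [hentry2, Matrix.one_apply]
      by_cases hij : i = j
      · subst hij
        rw [if_pos rfl, hss, hnorm]
        have hpos : (0:ℝ) < 1 + ‖v i‖ ^ 2 := by positivity
        have : p i * (1 + ‖v i‖ ^ 2) = 1 := by
          rw [h2 i]; field_simp
        push_cast
        exact_mod_cast congrArg (Complex.ofReal) this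
      · rw [if_neg hij, h1 j i (Ne.symm hij)]
        ring
  rw [← hL, ← hR]
  exact mul_eq_one_comm.symm
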